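/- Let s and A be real numbers, let I be an open interval, and let g : ℝ → ℝ be twice differentiable on I with g(t) > 0, g'(t) ≠ 0 and s²/4 + A·g(t)² > 0 for all t ∈ I. Define f(t) = g(t)·g'(t)/√(s²/4 + A·g(t)²). Then for every t ∈ I one has g''(t)/g(t) + s²·f(t)²/(4·g(t)⁴) − f'(t)·g'(t)/(f(t)·g(t)) = 0. -/

import Mathlib

/-- Section 6: the choice `f = g g' / √(s²/4 + A g²)` solves the ODE
`g''/g + s² f²/(4 g⁴) − f' g'/(f g) = 0` on an open interval. -/
theorem stmt_0 (s A a b : ℝ) (g g' g'' : ℝ → ℝ)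
    (hg : ∀ t ∈ Set.Ioo a b, HasDerivAt g (g' t) t)
    (hg' : ∀ t ∈ Set.Ioo a b, HasDerivAt g' (g'' t) t)
    (hgpos : ∀ t ∈ Set.Ioo a b, 0 < g t)
    (hg'ne : ∀ t ∈ Set.Ioo a b, g' t ≠ 0)
    (hrad : ∀ t ∈ Set.Ioo a b, 0 < s ^ 2 / 4 + A * g t ^ 2)
    (f : ℝ → ℝ)
    (hf : ∀ t : ℝ, f t = g t * g' t / Real.sqrt (s ^ 2 / 4 + A * g t ^ 2)) :
    ∀ t ∈ Set.Ioo a b,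
      g'' t / g t + s ^ 2 * f t ^ 2 / (4 * g t ^ 4)
        - deriv f t * g' t / (f t * g t) = 0 := by
  intro t ht
  have hgt := hgpos t ht
  have hg't := hg'ne t ht
  have hrt := hrad t ht
  have hsq : 0 < Real.sqrt (s ^ 2 / 4 + A * g t ^ 2) := Real.sqrt_pos.mpr hrt
  have hsq2 : Real.sqrt (s ^ 2 / 4 + A * g t ^ 2) ^ 2 = s ^ 2 / 4 + A * g t ^ 2 :=
    Real.sq_sqrt hrt.le
  have hfun : f = fun u => g u * g' u / Real.sqrt (s ^ 2 / 4 + A * g u ^ 2) := funext hf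
  have hN : HasDerivAt (fun u => g u * g' u) (g' t * g' t + g t * g'' t) t :=
    (hg t ht).mul (hg' t ht)
  have hu : HasDerivAt (fun u => s ^ 2 / 4 + A * g u ^ 2) (A * (2 * g t * g' t)) t := by
    have h1 := ((hg t ht).pow 2).const_mul A
    have h2 := h1.const_add (s ^ 2 / 4)
    simpa [mul_comm, mul_assoc, mul_left_comm] using h2
  have hD : HasDerivAt (fun u => Real.sqrt (s ^ 2 / 4 + A * g u ^ 2))
      (A * (2 * g t * g' t) / (2 * Real.sqrt (s ^ 2 / 4 + A * g t ^ 2))) t :=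
    hu.sqrt (ne_of_gt hrt)
  have hf' : HasDerivAt f (((g' t * g' t + g t * g'' t) * Real.sqrt (s ^ 2 / 4 + A * g t ^ 2) -
      g t * g' t * (A * (2 * g t * g' t) / (2 * Real.sqrt (s ^ 2 / 4 + A * g t ^ 2)))) /
      Real.sqrt (s ^ 2 / 4 + A * g t ^ 2) ^ 2) t := by
    rw [hfun]
    exact hN.div hD (ne_of_gt hsq)
  rw [hf'.deriv, hf t]
  have hgne := ne_of_gt hgt
  have hsqne := ne_of_gt hsq
  set q := Real.sqrt (s ^ 2 / 4 + A * g t ^ 2) with hq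
  clear_value q
  field_simp
  ring_nf
  linear_combination (-(4 * g' t ^ 2)) * hsq2
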